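/- If G is a connected S_{1,2}-free bipartite graph that is not a path, not an even cycle, and not obtainable from a complete bipartite graph by removing a matching, and u₁u₂u₃u₄ is an induced path in G, then at least one of the vertices u₁, u₂, u₃, u₄ has degree different from 2. -/

import Mathlib

open SimpleGraph

/-- `S_{k,l}`: two stars `K_{1,k}` and `K_{1,l}` with centers `0` and `1` joined by an edge.
Leaves of `0` are `2..k+1`; leaves of `1` are `k+2..k+l+1`. -/
def starStar (k l : ℕ) : SimpleGraph (Fin (k + l + 2)) :=
  SimpleGraph.fromRel fun a b =>
    ((a : ℕ) = 0 ∧ (b : ℕ) = 1) ∨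
    ((a : ℕ) = 0 ∧ 2 ≤ (b : ℕ) ∧ (b : ℕ) ≤ k + 1) ∨
    ((a : ℕ) = 1 ∧ k + 2 ≤ (b : ℕ))

/-- `G` contains no induced subgraph isomorphic to `S_{k,l}`. -/
def SFree (k l : ℕ) {V : Type*} (G : SimpleGraph V) : Prop :=
  ¬ ∃ f : Fin (k + l + 2) ↪ V, ∀ a b, G.Adj (f a) (f b) ↔ (starStar k l).Adj a b

/-- `(X, Y)` is a bipartition of the graph `G`. -/
def IsBipartition {V : Type*} (G : SimpleGraph V) (X Y : Set V) : Prop :=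
  (∀ v, v ∈ X ∨ v ∈ Y) ∧ Disjoint X Y ∧
    ∀ ⦃u v⦄, G.Adj u v → (u ∈ X ∧ v ∈ Y) ∨ (u ∈ Y ∧ v ∈ X)

/-- `G` is a path graph. -/
def IsPathGraph {V : Type*} (G : SimpleGraph V) : Prop :=
  ∃ n : ℕ, Nonempty (G ≃g pathGraph n)

/-- `G` is a cycle of length `n`. -/
def IsCycleGraph {V : Type*} (G : SimpleGraph V) (n : ℕ) : Prop :=
  3 ≤ n ∧ Nonempty (G ≃g cycleGraph n)

/-- `G` is obtained from a complete bipartite graph by removing the edges of a matching,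
the matching being encoded by an involution `m` (vertices with `m v = v` are unmatched). -/
def IsCompleteBipartiteMinusMatching {V : Type*} (G : SimpleGraph V) : Prop :=
  ∃ (X Y : Set V) (m : V → V),
    (∀ v, v ∈ X ∨ v ∈ Y) ∧ Disjoint X Y ∧ (∀ v, m (m v) = v) ∧
    ∀ u v, G.Adj u v ↔ ((u ∈ X ∧ v ∈ Y) ∨ (u ∈ Y ∧ v ∈ X)) ∧ m u ≠ v

section AuxLemmas
variable {V : Type*} {G : SimpleGraph V} [Fintype V]

set_option maxHeartbeats 2000000 in
lemma noS12 (hfree : SFree 1 2 G) (a b c d e : V)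
    (hab : G.Adj a b) (hac : G.Adj a c) (hbd : G.Adj b d) (hbe : G.Adj b e)
    (had : ¬G.Adj a d) (hae : ¬G.Adj a e) (hbc : ¬G.Adj b c)
    (hcd : ¬G.Adj c d) (hce : ¬G.Adj c e) (hde : ¬G.Adj d e)
    (hde' : d ≠ e) : False := by
  have hab' : a ≠ b := hab.ne
  have hac' : a ≠ c := hac.ne
  have hbd' : b ≠ d := hbd.ne
  have hbe' : b ≠ e := hbe.ne
  have had' : a ≠ d := fun h => hcd (h ▸ hac.symm)
  have hae' : a ≠ e := fun h => hce (h ▸ hac.symm)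
  have hbc' : b ≠ c := fun h => hcd (h ▸ hbd)
  have hcd' : c ≠ d := fun h => had (h ▸ hac)
  have hce' : c ≠ e := fun h => hae (h ▸ hac)
  have sab := hab.symm
  have sac := hac.symm
  have sbd := hbd.symm
  have sbe := hbe.symm
  have sad : ¬G.Adj d a := fun h => had h.symm
  have sae : ¬G.Adj e a := fun h => hae h.symm
  have sbc : ¬G.Adj c b := fun h => hbc h.symm
  have scd : ¬G.Adj d c := fun h => hcd h.symm
  have sce : ¬G.Adj e c := fun h => hce h.symm
  have sde : ¬G.Adj e d := fun h => hde h.symm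
  refine hfree ⟨⟨![a,b,c,d,e], ?_⟩, ?_⟩
  · intro i j hij
    fin_cases i <;> fin_cases j <;> simp_all <;> exact absurd hij (by assumption) <;> rfl
  · have hstar : ∀ i j : Fin 5, (starStar 1 2).Adj i j ↔
        ((i.val,j.val) = (0,1) ∨ (i.val,j.val) = (1,0) ∨ (i.val,j.val) = (0,2) ∨
         (i.val,j.val) = (2,0) ∨ (i.val,j.val) = (1,3) ∨ (i.val,j.val) = (3,1) ∨
         (i.val,j.val) = (1,4) ∨ (i.val,j.val) = (4,1)) := by
      intro i j
      have hi := i.isLt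
      have hj := j.isLt
      rw [starStar, SimpleGraph.fromRel_adj]
      simp only [Prod.mk.injEq, Ne, Fin.ext_iff]
      omega
    intro i j
    fin_cases i <;> fin_cases j <;> rw [hstar] <;> norm_num <;>
      first
        | assumption
        | exact SimpleGraph.irrefl G
        | (intro hF; exact (by assumption : ¬ _) hF)

lemma nbrs_of_deg2 (h : (G.neighborSet v).ncard = 2) (ha : G.Adj v a) (hb : G.Adj v b)
    (hab : a ≠ b) : G.neighborSet v = {a, b} := by
  have hsub : ({a, b} : Set V) ⊆ G.neighborSet v := by
    rintro x (rfl | rfl) <;> simpa using ‹_›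
  exact (Set.eq_of_subset_of_ncard_le hsub (by rw [h, Set.ncard_pair hab]) (Set.toFinite _)).symm

lemma deg_le_two_of_nbrs (h : G.neighborSet v = {a, b}) : (G.neighborSet v).ncard ≤ 2 := by
  rw [h]; exact (Set.ncard_insert_le _ _).trans (by simp)

lemma mem_of_deg2 (h : (G.neighborSet v).ncard = 2) (ha : G.Adj v a) (hb : G.Adj v b)
    (hab : a ≠ b) (hw : G.Adj v w) : w = a ∨ w = b := by
  have := nbrs_of_deg2 h ha hb hab
  have : w ∈ ({a,b} : Set V) := this ▸ hw
  simpa using this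

lemma deg1_unique (h : (G.neighborSet v).ncard = 1) (ha : G.Adj v a) (hw : G.Adj v w) :
    w = a := by
  obtain ⟨x, hx⟩ := Set.ncard_eq_one.mp h
  have h1 : w ∈ G.neighborSet v := hw
  have h2 : a ∈ G.neighborSet v := ha
  rw [hx] at h1 h2
  simp at h1 h2; rw [h1, h2]

lemma two_more_nbrs (h : 3 ≤ (G.neighborSet v).ncard) (hy : G.Adj v y) :
    ∃ w w', G.Adj v w ∧ G.Adj v w' ∧ w ≠ w' ∧ w ≠ y ∧ w' ≠ y := by
  have hfin : (G.neighborSet v \ {y}).Finite := Set.toFinite _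
  have hcard : 2 ≤ (G.neighborSet v \ {y}).ncard := by
    have := Set.ncard_diff_singleton_add_one (show y ∈ G.neighborSet v from hy) (Set.toFinite _)
    omega
  obtain ⟨w, hw, w', hw', hne⟩ := (Set.one_lt_ncard hfin).mp (by omega)
  obtain ⟨hw1, hw2⟩ := hw
  obtain ⟨hw'1, hw'2⟩ := hw'
  exact ⟨w, w', hw1, hw'1, hne, by simpa using hw2, by simpa using hw'2⟩

/-- An induced path on 4 vertices, all of degree 2. -/
def Good (G : SimpleGraph V) [Fintype V] (a b c d : V) : Prop :=
  (a ≠ b ∧ a ≠ c ∧ a ≠ d ∧ b ≠ c ∧ b ≠ d ∧ c ≠ d) ∧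
  (G.Adj a b ∧ G.Adj b c ∧ G.Adj c d) ∧
  (¬G.Adj a c ∧ ¬G.Adj a d ∧ ¬G.Adj b d) ∧
  ((G.neighborSet a).ncard = 2 ∧ (G.neighborSet b).ncard = 2 ∧
   (G.neighborSet c).ncard = 2 ∧ (G.neighborSet d).ncard = 2)

lemma Good.rev {a b c d : V} (h : Good G a b c d) : Good G d c b a := by
  obtain ⟨⟨h1,h2,h3,h4,h5,h6⟩,⟨g1,g2,g3⟩,⟨n1,n2,n3⟩,⟨d1,d2,d3,d4⟩⟩ := h
  exact ⟨⟨h6.symm,h5.symm,h3.symm,h4.symm,h2.symm,h1.symm⟩,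
    ⟨g3.symm,g2.symm,g1.symm⟩,
    ⟨fun h => n3 h.symm, fun h => n2 h.symm, fun h => n1 h.symm⟩, ⟨d4,d3,d2,d1⟩⟩

lemma step (htri : ∀ z w w', G.Adj z w → G.Adj z w' → ¬ G.Adj w w')
    (hfree : SFree 1 2 G) {a b x y z : V} (hG : Good G a b x y) (hyz : G.Adj y z) (hzx : z ≠ x) :
    (G.neighborSet z).ncard ≤ 2 ∧
      ((G.neighborSet z).ncard = 2 → Good G b x y z) := by
  obtain ⟨⟨hab,hax,hay,hbx,hby,hxy⟩,⟨gab,gbx,gxy⟩,⟨nax,nay,nby⟩,⟨da,db,dx,dy⟩⟩ := hG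
  have hza : z ≠ a := fun h => nay (h ▸ hyz.symm)
  have hzb : z ≠ b := fun h => nby (h ▸ hyz.symm)
  have hzy : z ≠ y := hyz.ne'
  have hnbz : ¬ G.Adj b z := fun h => by
    rcases mem_of_deg2 db gab.symm gbx hax h with rfl | rfl
    · exact hza rfl
    · exact hzx rfl
  have hnxz : ¬ G.Adj x z := fun h => by
    rcases mem_of_deg2 dx gbx.symm gxy hby h with rfl | rfl
    · exact hzb rfl
    · exact hzy rfl
  have hdeg : (G.neighborSet z).ncard ≤ 2 := by
    by_contra hlt
    obtain ⟨w, w', hw, hw', hww', hwy, hw'y⟩ :=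
      two_more_nbrs (by omega) hyz.symm
    have hnyw : ∀ {u}, G.Adj z u → u ≠ y → ¬ G.Adj y u := fun {u} hu huy h => by
      rcases mem_of_deg2 dy gxy.symm hyz (Ne.symm hzx) h with rfl | rfl
      · exact hnxz hu.symm
      · exact hu.ne rfl
    have hnxw : ∀ {u}, G.Adj z u → u ≠ y → ¬ G.Adj x u := fun {u} hu huy h => by
      rcases mem_of_deg2 dx gbx.symm gxy hby h with rfl | rfl
      · exact hnbz hu.symm
      · exact huy rfl
    exact noS12 hfree y z x w w' hyz gxy.symm hw hw'
      (hnyw hw hwy) (hnyw hw' hw'y) (fun h => hnxz h.symm)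
      (hnxw hw hwy) (hnxw hw' hw'y)
      (htri z w w' hw hw') hww'
  refine ⟨hdeg, fun hdz => ?_⟩
  exact ⟨⟨hbx, hby, hzb.symm, hxy, hzx.symm, hzy.symm⟩, ⟨gbx, gxy, hyz⟩,
    ⟨nby, hnbz, hnxz⟩, ⟨db, dx, dy, hdz⟩⟩



lemma walkInv (htri : ∀ z w w', G.Adj z w → G.Adj z w' → ¬ G.Adj w w')
    (hfree : SFree 1 2 G) {u₁ u₂ u₃ u₄ : V} (hG : Good G u₁ u₂ u₃ u₄) :
    ∀ {v t : V} (p : G.Walk v t), t = u₂ → p.IsPath →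
      (G.neighborSet v).ncard ≤ 2 ∧
      ∀ w, G.Adj v w → w ∉ p.support →
        ((G.neighborSet w).ncard ≤ 2 ∧
         ((G.neighborSet w).ncard = 1 ∨ (∃ a b, Good G a b v w) ∨
          (∃ a d, Good G a v w d))) := by
  intro v t p
  induction p with
  | nil =>
    intro ht _
    subst ht
    obtain ⟨⟨hab,hax,hay,hbx,hby,hxy⟩,⟨g12,g23,g34⟩,⟨n13,n14,n24⟩,⟨d1,d2,d3,d4⟩⟩ := id hG
    refine ⟨le_of_eq d2, fun w hw hwsup => ?_⟩
    rcases mem_of_deg2 d2 g12.symm g23 hax hw with rfl | rfl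
    · exact ⟨le_of_eq d1, Or.inr (Or.inl ⟨u₄, u₃, Good.rev hG⟩)⟩
    · exact ⟨le_of_eq d3, Or.inr (Or.inr ⟨u₁, u₄, hG⟩)⟩
  | cons h q ih =>
    rename_i v' w' _
    intro ht hp
    subst ht
    rw [SimpleGraph.Walk.cons_isPath_iff] at hp
    have IH := ih rfl hp.1
    have hv := IH.2 _ h.symm hp.2
    refine ⟨hv.1, fun w hw hwsup => ?_⟩
    simp only [SimpleGraph.Walk.support_cons, List.mem_cons] at hwsup
    push_neg at hwsup
    have hwq : w ∉ q.support := hwsup.2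
    have hwv' : w ≠ w' := fun hh => hwq (hh ▸ q.start_mem_support)
    have hwpos : 1 ≤ (G.neighborSet w).ncard :=
      (Set.ncard_pos (Set.toFinite _)).mpr ⟨_, hw.symm⟩
    rcases hv.2 with hdeg1 | ⟨a, b, hGd⟩ | ⟨a, d, hGd⟩
    · exact absurd (deg1_unique hdeg1 h hw) hwv'
    · have st := step htri hfree hGd hw hwv'
      refine ⟨st.1, ?_⟩
      rcases Nat.lt_or_ge (G.neighborSet w).ncard 2 with h2 | h2
      · exact Or.inl (by omega)
      · exact Or.inr (Or.inl ⟨b, w', st.2 (by omega)⟩)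
    · -- Good a w' v d : neighbors of v are w' and d, so w = d
      obtain ⟨⟨hab,hax,hay,hbx,hby,hxy⟩,⟨g1,g2,g3⟩,⟨n1,n2,n3⟩,⟨d1,d2,d3,d4⟩⟩ := hGd
      have : w = w' ∨ w = d := mem_of_deg2 d3 g2.symm g3 hby hw
      rcases this with rfl | rfl
      · exact absurd rfl hwv'
      · exact ⟨le_of_eq d4, Or.inr (Or.inl ⟨a, w',
          ⟨⟨hab,hax,hay,hbx,hby,hxy⟩,⟨g1,g2,g3⟩,⟨n1,n2,n3⟩,⟨d1,d2,d3,d4⟩⟩⟩)⟩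

lemma allDeg (htri : ∀ z w w', G.Adj z w → G.Adj z w' → ¬ G.Adj w w')
    (hfree : SFree 1 2 G) {u₁ u₂ u₃ u₄ : V} (hG : Good G u₁ u₂ u₃ u₄)
    (hconn : G.Connected) : ∀ v, (G.neighborSet v).ncard ≤ 2 := by
  classical
  intro v
  obtain ⟨w⟩ := hconn v u₂
  exact (walkInv htri hfree hG w.toPath rfl w.toPath.2).1

lemma modfact {n i j : ℕ} (hn : 1 ≤ n) (hi : i ≤ n) (hj : j ≤ n) :
    (n + 1 - j + i) % (n + 1) = 1 ↔ (i = j + 1 ∨ (j = n ∧ i = 0)) := by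
  rcases Nat.lt_or_ge (n + 1 - j + i) (n + 1) with h | h
  · rw [Nat.mod_eq_of_lt h]; omega
  · rw [Nat.mod_eq_sub_mod h, Nat.mod_eq_of_lt (by omega)]; omega

lemma getVert_inj {a b : V} {p : G.Walk a b} (hp : p.IsPath) :
    ∀ i j, i ≤ p.length → j ≤ p.length → p.getVert i = p.getVert j → i = j := by
  induction p with
  | nil => intro i j hi hj _; simp at hi hj; omega
  | cons h q ih =>
    rename_i u v w hadj
    intro i j hi hj hij
    rw [SimpleGraph.Walk.cons_isPath_iff] at hp
    have key : ∀ k, k ≤ q.length → q.getVert k ∈ q.support := fun k hk =>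
      SimpleGraph.Walk.mem_support_iff_exists_getVert.mpr ⟨k, rfl, hk⟩
    match i, j with
    | 0, 0 => rfl
    | 0, j+1 =>
      exfalso
      rw [SimpleGraph.Walk.getVert_zero, SimpleGraph.Walk.getVert_cons_succ] at hij
      exact hp.2 (hij ▸ key j (by simpa using hj))
    | i+1, 0 =>
      exfalso
      rw [SimpleGraph.Walk.getVert_zero, SimpleGraph.Walk.getVert_cons_succ] at hij
      exact hp.2 (hij ▸ key i (by simpa using hi))
    | i+1, j+1 =>
      rw [SimpleGraph.Walk.getVert_cons_succ, SimpleGraph.Walk.getVert_cons_succ] at hij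
      have := ih hp.1 i j (by simpa using hi) (by simpa using hj) hij
      omega
lemma struct (hconn : G.Connected) (hdeg : ∀ v, (G.neighborSet v).ncard ≤ 2)
    {X : Set V} (hflip : ∀ u w, G.Adj u w → (u ∈ X ↔ ¬(w ∈ X)))
    (hcard : 4 ≤ Fintype.card V) :
    IsPathGraph G ∨ ∃ n, Even n ∧ IsCycleGraph G n := by
  classical
  have hV : Nonempty V := Fintype.card_pos_iff.mp (by omega)
  obtain ⟨v₀⟩ := hV
  set S : Set ℕ := {m | ∃ (a b : V) (q : G.Walk a b), q.IsPath ∧ q.length = m} with hS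
  have hSne : S.Nonempty := ⟨0, v₀, v₀, SimpleGraph.Walk.nil, SimpleGraph.Walk.IsPath.nil, rfl⟩
  have hSbdd : BddAbove S := ⟨Fintype.card V, fun m hm => by
    obtain ⟨a, b, q, hq, hm⟩ := hm; exact hm ▸ hq.length_lt.le⟩
  obtain ⟨a, b, p, hp, hlen⟩ := Nat.sSup_mem hSne hSbdd
  have hmax : ∀ (c d : V) (q : G.Walk c d), q.IsPath → q.length ≤ p.length :=
    fun c d q hq => hlen ▸ le_csSup hSbdd ⟨c, d, q, hq, rfl⟩
  clear hlen
  set n := p.length with hn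
  set f : ℕ → V := p.getVert with hf
  have finj : ∀ i j, i ≤ n → j ≤ n → f i = f j → i = j := getVert_inj hp
  have fadj : ∀ i, i < n → G.Adj (f i) (f (i+1)) := fun i h => p.adj_getVert_succ h
  have hfa : f 0 = a := p.getVert_zero
  have hfb : f n = b := p.getVert_length
  have hmem : ∀ i, i ≤ n → f i ∈ p.support := fun i hi =>
    SimpleGraph.Walk.mem_support_iff_exists_getVert.mpr ⟨i, rfl, hi⟩
  have hnb_a : ∀ w, G.Adj a w → w ∈ p.support := by
    intro w hw
    by_contra hws
    have hcons : (SimpleGraph.Walk.cons hw.symm p).IsPath := hp.cons hws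
    have := hmax _ _ _ hcons
    simp [SimpleGraph.Walk.length_cons] at this
    omega
  have hnb_b : ∀ w, G.Adj b w → w ∈ p.support := by
    intro w hw
    by_contra hws
    have hws' : w ∉ p.reverse.support := by
      rwa [SimpleGraph.Walk.support_reverse, List.mem_reverse]
    have hcons : (SimpleGraph.Walk.cons hw.symm p.reverse).IsPath := hp.reverse.cons hws'
    have := hmax _ _ _ hcons
    simp [SimpleGraph.Walk.length_cons, SimpleGraph.Walk.length_reverse] at this
    omega
  have hinternal : ∀ i, 0 < i → i < n → G.neighborSet (f i) = {f (i-1), f (i+1)} := by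
    intro i h0 hi
    have h1 : G.Adj (f i) (f (i-1)) := by
      have := fadj (i-1) (by omega)
      rw [Nat.sub_add_cancel h0] at this
      exact this.symm
    have h2 : G.Adj (f i) (f (i+1)) := fadj i hi
    have hne : f (i-1) ≠ f (i+1) := fun h => by
      have := finj _ _ (by omega) (by omega) h; omega
    have hsub : ({f (i-1), f (i+1)} : Set V) ⊆ G.neighborSet (f i) := by
      rintro x (rfl | rfl) <;> assumption
    have h2le : 2 ≤ (G.neighborSet (f i)).ncard := by
      have := Set.ncard_le_ncard hsub (Set.toFinite _)
      rwa [Set.ncard_pair hne] at this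
    exact nbrs_of_deg2 (le_antisymm (hdeg _) h2le) h1 h2 hne
  have hclosed : ∀ v ∈ p.support, ∀ w, G.Adj v w → w ∈ p.support := by
    intro v hv w hw
    obtain ⟨i, hfi, hin⟩ := SimpleGraph.Walk.mem_support_iff_exists_getVert.mp hv
    subst hfi
    have hw2 : G.Adj (f i) w := hw
    rcases Nat.eq_zero_or_pos i with rfl | h0
    · rw [hfa] at hw2; exact hnb_a _ hw2
    rcases eq_or_lt_of_le hin with rfl | hilt
    · rw [hfb] at hw2; exact hnb_b _ hw2
    · have hni := hinternal i h0 hilt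
      have hwmem : w ∈ ({f (i-1), f (i+1)} : Set V) := hni ▸ hw2
      rcases hwmem with h | h
      · exact h ▸ hmem _ (by omega)
      · exact h ▸ hmem _ (by omega)
  have hcover : ∀ v, v ∈ p.support := by
    have key : ∀ (c t : V) (q : G.Walk c t), t ∈ p.support → c ∈ p.support := by
      intro c t q
      induction q with
      | nil => exact fun h => h
      | cons h q ih =>
        intro ht
        exact hclosed _ (ih ht) _ h.symm
    intro v
    obtain ⟨w⟩ := hconn v a
    exact key v a w p.start_mem_support
  have hcardeq : Fintype.card V = n + 1 := by
    have hnodup := hp.support_nodup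
    have huniv : p.support.toFinset = Finset.univ :=
      Finset.eq_univ_iff_forall.mpr fun v => List.mem_toFinset.mpr (hcover v)
    have : p.support.toFinset.card = p.support.length := List.toFinset_card_of_nodup hnodup
    rw [← Finset.card_univ, ← huniv, this, SimpleGraph.Walk.length_support]
  have hn3 : 3 ≤ n := by omega
  have hpar : ∀ i, i ≤ n → ((f i ∈ X) ↔ (a ∈ X ↔ Even i)) := by
    intro i
    induction i with
    | zero => intro _; rw [hfa]; simp
    | succ i ih =>
      intro h
      have h1 := hflip _ _ (fadj i (by omega))
      have h2 := ih (by omega)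
      rw [Nat.even_add_one]
      tauto
  have ha1 : G.Adj a (f 1) := by
    have := fadj 0 (by omega); rwa [hfa] at this
  have hbn : G.Adj b (f (n-1)) := by
    have := fadj (n-1) (by omega)
    rw [Nat.sub_add_cancel (by omega), hfb] at this
    exact this.symm
  have hb_ne_f1 : b ≠ f 1 := by
    intro h
    have := finj n 1 (le_refl n) (by omega) (by rw [hfb, h])
    omega
  have hend_a : ∀ w, G.Adj a w → w = f 1 ∨ w = f n := by
    intro w hw
    obtain ⟨i, hfi, hin⟩ := SimpleGraph.Walk.mem_support_iff_exists_getVert.mp (hnb_a w hw)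
    have hfi : f i = w := hfi
    by_contra hcon
    push_neg at hcon
    have hi0 : i ≠ 0 := by
      rintro rfl
      rw [← hfi, hfa] at hw
      exact G.irrefl hw
    have hi1 : i ≠ 1 := by rintro rfl; exact hcon.1 hfi.symm
    have hiN : i ≠ n := by rintro rfl; exact hcon.2 hfi.symm
    have hint := hinternal i (by omega) (by omega)
    have hmemw : a ∈ G.neighborSet (f i) := by rw [hfi]; exact hw.symm
    rw [hint] at hmemw
    rcases hmemw with h | h
    · have := finj 0 (i-1) (by omega) (by omega) (by rw [hfa, h])
      omega
    · have := finj 0 (i+1) (by omega) (by omega) (by rw [hfa, h])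
      omega
  have hend_b : ∀ w, G.Adj b w → w = f (n-1) ∨ w = f 0 := by
    intro w hw
    obtain ⟨i, hfi, hin⟩ := SimpleGraph.Walk.mem_support_iff_exists_getVert.mp (hnb_b w hw)
    have hfi : f i = w := hfi
    by_contra hcon
    push_neg at hcon
    have hiN : i ≠ n := by
      rintro rfl
      rw [← hfi, hfb] at hw
      exact G.irrefl hw
    have hiN1 : i ≠ n - 1 := by rintro rfl; exact hcon.1 hfi.symm
    have hi0 : i ≠ 0 := by rintro rfl; exact hcon.2 hfi.symm
    have hint := hinternal i (by omega) (by omega)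
    have hmemw : b ∈ G.neighborSet (f i) := by rw [hfi]; exact hw.symm
    rw [hint] at hmemw
    rcases hmemw with h | h
    · have := finj n (i-1) (le_refl n) (by omega) (by rw [hfb, h])
      omega
    · have := finj n (i+1) (by omega) (by omega) (by rw [hfb, h])
      omega
  rcases Nat.lt_or_ge ((G.neighborSet a).ncard) 2 with hA | hA
  · -- both endpoints have degree 1 : path graph
    have hdega : (G.neighborSet a).ncard = 1 := by
      have : 1 ≤ (G.neighborSet a).ncard :=
        (Set.ncard_pos (Set.toFinite _)).mpr ⟨f 1, ha1⟩
      omega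
    have hdegb : (G.neighborSet b).ncard = 1 := by
      by_contra hB
      have hB2 : (G.neighborSet b).ncard = 2 := by
        have h1 : 1 ≤ (G.neighborSet b).ncard :=
          (Set.ncard_pos (Set.toFinite _)).mpr ⟨f (n-1), hbn⟩
        have := hdeg b
        omega
      obtain ⟨w, hwmem, hwne⟩ := Set.exists_ne_of_one_lt_ncard
        (show 1 < (G.neighborSet b).ncard by omega) (f (n-1))
      have hw : G.Adj b w := hwmem
      rcases hend_b w hw with h | h
      · exact hwne h
      · rw [h, hfa] at hw
        have h2 : 2 ≤ (G.neighborSet a).ncard := by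
          have hsub : ({f 1, b} : Set V) ⊆ G.neighborSet a := by
            rintro x (rfl | rfl)
            · exact ha1
            · exact hw.symm
          have := Set.ncard_le_ncard hsub (Set.toFinite _)
          rwa [Set.ncard_pair (Ne.symm hb_ne_f1)] at this
        omega
    have hadjchar : ∀ i j, i ≤ n → j ≤ n → (G.Adj (f i) (f j) ↔ (j = i+1 ∨ i = j+1)) := by
      intro i j hi hj
      constructor
      · intro h
        rcases Nat.eq_zero_or_pos i with rfl | hipos
        · rw [hfa] at h
          have := deg1_unique hdega ha1 h
          have := finj j 1 hj (by omega) this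
          omega
        rcases eq_or_lt_of_le hi with rfl | hilt
        · rw [hfb] at h
          have := deg1_unique hdegb hbn h
          have := finj j (n-1) hj (by omega) this
          omega
        · have hint := hinternal i hipos hilt
          have hmemw : f j ∈ G.neighborSet (f i) := h
          rw [hint] at hmemw
          rcases hmemw with h' | h'
          · have := finj j (i-1) hj (by omega) h'
            omega
          · have := finj j (i+1) hj (by omega) h'
            omega
      · rintro (rfl | rfl)
        · exact fadj i (by omega)
        · exact (fadj j (by omega)).symm
    have hbij : Function.Bijective (fun i : Fin (n+1) => f i.val) := by
      rw [Fintype.bijective_iff_injective_and_card]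
      refine ⟨fun i j hij => Fin.ext (finj _ _ (by omega) (by omega) hij), by simp [hcardeq]⟩
    left
    refine ⟨n+1, ⟨SimpleGraph.Iso.symm ⟨Equiv.ofBijective _ hbij, ?_⟩⟩⟩
    intro i j
    rw [pathGraph_adj]
    show G.Adj (f i.val) (f j.val) ↔ _
    rw [hadjchar i.val j.val (by omega) (by omega)]
    omega
  · -- cycle graph
    have hdega : (G.neighborSet a).ncard = 2 := le_antisymm (hdeg a) hA
    obtain ⟨w, hwmem, hwne⟩ := Set.exists_ne_of_one_lt_ncard
      (show 1 < (G.neighborSet a).ncard by omega) (f 1)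
    have hw : G.Adj a w := hwmem
    have hab : G.Adj a b := by
      rcases hend_a w hw with h | h
      · exact absurd h hwne
      · rw [h, hfb] at hw; exact hw
    have hNa : G.neighborSet a = {f 1, f n} := by
      refine nbrs_of_deg2 hdega ha1 ?_ ?_
      · rw [hfb]; exact hab
      · intro h
        have := finj 1 n (by omega) (le_refl n) h
        omega
    have hdegb : (G.neighborSet b).ncard = 2 := by
      refine le_antisymm (hdeg b) ?_
      have hsub : ({f (n-1), a} : Set V) ⊆ G.neighborSet b := by
        rintro x (rfl | rfl)
        · exact hbn
        · exact hab.symm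
      have hne : f (n-1) ≠ a := by
        intro h
        have := finj (n-1) 0 (by omega) (by omega) (by rw [hfa, h])
        omega
      have := Set.ncard_le_ncard hsub (Set.toFinite _)
      rwa [Set.ncard_pair hne] at this
    have hNb : G.neighborSet b = {f (n-1), f 0} := by
      refine nbrs_of_deg2 hdegb hbn ?_ ?_
      · rw [hfa]; exact hab.symm
      · intro h
        have := finj (n-1) 0 (by omega) (by omega) h
        omega
    have hadjchar : ∀ i j, i ≤ n → j ≤ n →
        (G.Adj (f i) (f j) ↔ (j = i+1 ∨ i = j+1 ∨ (i = 0 ∧ j = n) ∨ (i = n ∧ j = 0))) := by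
      intro i j hi hj
      constructor
      · intro h
        rcases Nat.eq_zero_or_pos i with rfl | hipos
        · rw [hfa] at h
          have : f j ∈ G.neighborSet a := h
          rw [hNa] at this
          rcases this with h' | h'
          · have := finj j 1 hj (by omega) h'
            omega
          · have := finj j n hj (le_refl n) h'
            omega
        rcases eq_or_lt_of_le hi with rfl | hilt
        · rw [hfb] at h
          have : f j ∈ G.neighborSet b := h
          rw [hNb] at this
          rcases this with h' | h'
          · have := finj j (n-1) hj (by omega) h'
            omega
          · have := finj j 0 hj (by omega) h'
            omega
        · have hint := hinternal i hipos hilt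
          have hmemw : f j ∈ G.neighborSet (f i) := h
          rw [hint] at hmemw
          rcases hmemw with h' | h'
          · have := finj j (i-1) hj (by omega) h'
            omega
          · have := finj j (i+1) hj (by omega) h'
            omega
      · rintro (rfl | rfl | ⟨rfl, rfl⟩ | ⟨rfl, rfl⟩)
        · exact fadj i (by omega)
        · exact (fadj j (by omega)).symm
        · rw [hfa, hfb]; exact hab
        · rw [hfa, hfb]; exact hab.symm
    have hodd : ¬ Even n := by
      have h1 := hflip _ _ hab
      have h2 := hpar n (le_refl n)
      rw [hfb] at h2
      by_cases hax : a ∈ X <;> by_cases hbx : b ∈ X <;> by_cases he : Even n <;> tauto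
    have hbij : Function.Bijective (fun i : Fin (n+1) => f i.val) := by
      rw [Fintype.bijective_iff_injective_and_card]
      refine ⟨fun i j hij => Fin.ext (finj _ _ (by omega) (by omega) hij), by simp [hcardeq]⟩
    right
    refine ⟨n+1, Nat.even_add_one.mpr hodd, by omega, ⟨SimpleGraph.Iso.symm ⟨Equiv.ofBijective _ hbij, ?_⟩⟩⟩
    intro i j
    rw [SimpleGraph.cycleGraph_adj']
    show G.Adj (f i.val) (f j.val) ↔ _
    rw [hadjchar i.val j.val (by omega) (by omega)]
    have hs1 : ((i - j : Fin (n+1))).val = (n + 1 - j.val + i.val) % (n+1) := by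
      rw [Fin.sub_def]
    have hs2 : ((j - i : Fin (n+1))).val = (n + 1 - i.val + j.val) % (n+1) := by
      rw [Fin.sub_def]
    rw [hs1, hs2, modfact (by omega) (by omega) (by omega), modfact (by omega) (by omega) (by omega)]
    omega


end AuxLemmas


/-- In a connected `S_{1,2}`-free bipartite graph which is not a path, not an even cycle
and not a complete bipartite graph minus a matching, every induced path `u₁u₂u₃u₄` has a
vertex of degree different from `2`. -/
theorem stmt4 {V : Type*} [Fintype V] (G : SimpleGraph V) (X Y : Set V)
    (hbip : IsBipartition G X Y) (hconn : G.Connected) (hfree : SFree 1 2 G)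
    (hnpath : ¬ IsPathGraph G) (hncycle : ¬ ∃ n, Even n ∧ IsCycleGraph G n)
    (hncbm : ¬ IsCompleteBipartiteMinusMatching G)
    (u₁ u₂ u₃ u₄ : V)
    (hne : u₁ ≠ u₂ ∧ u₁ ≠ u₃ ∧ u₁ ≠ u₄ ∧ u₂ ≠ u₃ ∧ u₂ ≠ u₄ ∧ u₃ ≠ u₄)
    (h12 : G.Adj u₁ u₂) (h23 : G.Adj u₂ u₃) (h34 : G.Adj u₃ u₄)
    (h13 : ¬ G.Adj u₁ u₃) (h14 : ¬ G.Adj u₁ u₄) (h24 : ¬ G.Adj u₂ u₄) :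
    (G.neighborSet u₁).ncard ≠ 2 ∨ (G.neighborSet u₂).ncard ≠ 2 ∨
      (G.neighborSet u₃).ncard ≠ 2 ∨ (G.neighborSet u₄).ncard ≠ 2 := by
  classical
  by_contra hcon
  push_neg at hcon
  obtain ⟨hd1, hd2, hd3, hd4⟩ := hcon
  obtain ⟨hne12, hne13, hne14, hne23, hne24, hne34⟩ := hne
  obtain ⟨hXY, hdisj, hadjXY⟩ := hbip
  have hflip : ∀ u w, G.Adj u w → (u ∈ X ↔ ¬(w ∈ X)) := by
    intro u w h
    rcases hadjXY h with ⟨hu, hw⟩ | ⟨hu, hw⟩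
    · exact ⟨fun _ hwX => Set.disjoint_left.mp hdisj hwX hw,
        fun _ => hu⟩
    · exact ⟨fun hh => absurd hh (fun hh' => Set.disjoint_left.mp hdisj hh' hu),
        fun hh => ((hh hw).elim : u ∈ X)⟩
  have htri : ∀ z w w', G.Adj z w → G.Adj z w' → ¬ G.Adj w w' := by
    intro z w w' h1 h2 h3
    have f1 := hflip _ _ h1
    have f2 := hflip _ _ h2
    have f3 := hflip _ _ h3
    tauto
  have hGood : Good G u₁ u₂ u₃ u₄ :=
    ⟨⟨hne12, hne13, hne14, hne23, hne24, hne34⟩, ⟨h12, h23, h34⟩,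
     ⟨h13, h14, h24⟩, ⟨hd1, hd2, hd3, hd4⟩⟩
  have hdeg : ∀ v, (G.neighborSet v).ncard ≤ 2 := allDeg htri hfree hGood hconn
  have hcard4 : 4 ≤ Fintype.card V := by
    have hseteq : ({u₁, u₂, u₃, u₄} : Finset V).card = 4 := by
      rw [Finset.card_insert_of_notMem (by simp [hne12, hne13, hne14]),
        Finset.card_insert_of_notMem (by simp [hne23, hne24]),
        Finset.card_insert_of_notMem (by simp [hne34]), Finset.card_singleton]
    calc 4 = ({u₁, u₂, u₃, u₄} : Finset V).card := hseteq.symm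
    _ ≤ Fintype.card V := Finset.card_le_univ _
  rcases struct hconn hdeg hflip hcard4 with hP | hC
  · exact hnpath hP
  · exact hncycle hC
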